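/- Let X be a combinatorially fibrant cubical transition system, i.e., for any n ≥ 1, states α, β, and actions u₁,v₁,…,uₙ,vₙ with μ(uᵢ) = μ(vᵢ) for all i, if (α,u₁,…,uₙ,β) is a transition then so is (α,v₁,…,vₙ,β). Define Path(X) with the same states S, actions L ×_Σ L = {(u,v) ∈ L × L : μ(u) = μ(v)} labelled by μ, and transitions the tuples (α,(u₁⁰,u₁¹),…,(uₙ⁰,uₙ¹),β) such that all 2ⁿ tuples (α,u₁^{ε₁},…,uₙ^{εₙ},β) with εᵢ ∈ {0,1} are transitions of X. Then Path(X) is a cubical transition system, and a tuple (α,(u₁⁰,u₁¹),…,(uₙ⁰,uₙ¹),β) is a transition of Path(X) if and only if there exist ε₁,…,εₙ ∈ {0,1} such that (α,u₁^{ε₁},…,uₙ^{εₙ},β) is a transition of X. -/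

import Mathlib

/-- The Multiset axiom for a transition relation: transitions are closed under
permutation of the list of actions. -/
def MultisetAxiom {S L : Type*} (T : S → List L → S → Prop) : Prop :=
  ∀ (α : S) (l l' : List L) (β : S), T α l β → l.Perm l' → T α l' β

/-- The Composition axiom (the 5-ary "patching" axiom). -/
def CompositionAxiom {S L : Type*} (T : S → List L → S → Prop) : Prop :=
  ∀ (α : S) (l₁ l₂ l₃ : List L) (β ν₁ ν₂ : S),
    l₁ ≠ [] → l₂ ≠ [] → l₃ ≠ [] →
    T α (l₁ ++ l₂ ++ l₃) β → T α l₁ ν₁ → T ν₁ (l₂ ++ l₃) β →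
    T α (l₁ ++ l₂) ν₂ → T ν₂ l₃ β → T ν₁ l₂ ν₂

/-- Every action is used by some 1-transition. -/
def AllUsed {S L : Type*} (T : S → List L → S → Prop) : Prop :=
  ∀ u : L, ∃ α β, T α [u] β

/-- The Intermediate state axiom: every splitting of a transition admits an
intermediate state. -/
def IntermediateAxiom {S L : Type*} (T : S → List L → S → Prop) : Prop :=
  ∀ (α : S) (l₁ l₂ : List L) (β : S), l₁ ≠ [] → l₂ ≠ [] → T α (l₁ ++ l₂) β →
    ∃ ν, T α l₁ ν ∧ T ν l₂ β

/-- The Unique intermediate state axiom (CSA2). -/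
def CSA2 {S L : Type*} (T : S → List L → S → Prop) : Prop :=
  ∀ (α : S) (l₁ l₂ : List L) (β : S), l₁ ≠ [] → l₂ ≠ [] → T α (l₁ ++ l₂) β →
    ∃! ν, T α l₁ ν ∧ T ν l₂ β

/-- `Sel l l'` : the list `l'` of actions is obtained from the list `l` of pairs of
actions by choosing, in each position, either the first or the second component. -/
def Sel {L : Type*} : List (L × L) → List L → Prop :=
  List.Forall₂ (fun p u => u = p.1 ∨ u = p.2)

/-- A cubical transition system is combinatorially fibrant if whenever
`(α,u₁,…,uₙ,β)` is a transition and `μ(uᵢ) = μ(vᵢ)` for all `i`, the tuple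
`(α,v₁,…,vₙ,β)` is also a transition. -/
def CombFibrant {S L Lab : Type*} (μ : L → Lab) (T : S → List L → S → Prop) : Prop :=
  ∀ (α : S) (l l' : List L) (β : S), T α l β →
    List.Forall₂ (fun u v => μ u = μ v) l l' → T α l' β

/-- The transitions of the path object `Path(X)`: states are unchanged, actions are
the pairs `(u,v)` with `μ(u) = μ(v)`, and `(α,(u₁⁰,u₁¹),…,(uₙ⁰,uₙ¹),β)` is a
transition iff all `2ⁿ` selections `(α,u₁^{ε₁},…,uₙ^{εₙ},β)` are transitions of `X`. -/
def PathT {S L Lab : Type*} (μ : L → Lab) (T : S → List L → S → Prop) :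
    S → List (L × L) → S → Prop :=
  fun α l β => (∀ p ∈ l, μ p.1 = μ p.2) ∧ ∀ l', Sel l l' → T α l' β

/-- Every list of pairs admits a selection (take first components). -/
lemma sel_fst {L : Type*} (l : List (L × L)) : Sel l (l.map Prod.fst) := by
  induction l with
  | nil => exact List.Forall₂.nil
  | cons p t ih => exact List.Forall₂.cons (Or.inl rfl) ih

lemma sel_labels {L Lab : Type*} (μ : L → Lab) {l : List (L × L)} {a b : List L}
    (hl : ∀ p ∈ l, μ p.1 = μ p.2) (ha : Sel l a) (hb : Sel l b) :
    List.Forall₂ (fun u v => μ u = μ v) a b := by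
  induction ha generalizing b with
  | nil => cases hb; exact List.Forall₂.nil
  | @cons p u l' a' hp _ ih =>
    cases hb with
    | cons hq hb' =>
      refine List.Forall₂.cons ?_ (ih (fun q hq => hl q (List.mem_cons_of_mem _ hq)) hb')
      have hpl := hl p List.mem_cons_self
      rcases hp with rfl | rfl <;> rcases hq with rfl | rfl <;> simp [hpl]

lemma sel_append {L : Type*} {l₁ l₂ : List (L × L)} {a₁ a₂ : List L}
    (h₁ : Sel l₁ a₁) (h₂ : Sel l₂ a₂) : Sel (l₁ ++ l₂) (a₁ ++ a₂) :=
  List.rel_append h₁ h₂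

lemma sel_ne_nil {L : Type*} {l : List (L × L)} {a : List L}
    (h : Sel l a) (hne : l ≠ []) : a ≠ [] := by
  cases h with
  | nil => exact absurd rfl hne
  | cons _ _ => simp

lemma sel_append_split {L : Type*} {l₁ l₂ : List (L × L)} {a : List L}
    (h : Sel (l₁ ++ l₂) a) : ∃ a₁ a₂, a = a₁ ++ a₂ ∧ Sel l₁ a₁ ∧ Sel l₂ a₂ := by
  induction l₁ generalizing a with
  | nil => exact ⟨[], a, rfl, List.Forall₂.nil, h⟩
  | cons p t ih =>
    cases h with
    | cons hp h' =>
      obtain ⟨a₁, a₂, rfl, h₁, h₂⟩ := ih h'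
      exact ⟨_ :: a₁, a₂, rfl, List.Forall₂.cons hp h₁, h₂⟩

theorem stmt10 {S L Lab : Type*} (μ : L → Lab) (T : S → List L → S → Prop)
    (hmul : MultisetAxiom T) (hcomp : CompositionAxiom T)
    (hused : AllUsed T) (hint : IntermediateAxiom T)
    (hcf : CombFibrant μ T) :
    MultisetAxiom (PathT μ T) ∧ CompositionAxiom (PathT μ T) ∧
    (∀ u v : L, μ u = μ v → ∃ α β, PathT μ T α [(u, v)] β) ∧
    IntermediateAxiom (PathT μ T) ∧
    (∀ (α : S) (l : List (L × L)) (β : S),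
      PathT μ T α l β ↔
        (∀ p ∈ l, μ p.1 = μ p.2) ∧ ∃ l', Sel l l' ∧ T α l' β) := by
  refine ⟨?_, ?_, ?_, ?_, ?_⟩
  · -- Multiset
    rintro α l l' β ⟨hlab, hT⟩ hperm
    refine ⟨fun p hp => hlab p (hperm.symm.subset hp), fun a ha => ?_⟩
    obtain ⟨m, hm, hperm'⟩ := List.perm_comp_forall₂ hperm ha
    exact hmul α m a β (hT m hm) hperm'
  · -- Composition
    rintro α l₁ l₂ l₃ β ν₁ ν₂ h1 h2 h3 ⟨hlab, hT⟩ ⟨_, hT1⟩ ⟨_, hT23⟩ ⟨_, hT12⟩ ⟨_, hT3⟩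
    refine ⟨fun p hp => hlab p (by simp [hp]), fun m₂ hm₂ => ?_⟩
    set m₁ := l₁.map Prod.fst with hm₁def
    set m₃ := l₃.map Prod.fst with hm₃def
    have s₁ := sel_fst l₁
    have s₃ := sel_fst l₃
    exact hcomp α m₁ m₂ m₃ β ν₁ ν₂
      (sel_ne_nil s₁ h1) (sel_ne_nil hm₂ h2) (sel_ne_nil s₃ h3)
      (hT _ (sel_append (sel_append s₁ hm₂) s₃)) (hT1 _ s₁) (hT23 _ (sel_append hm₂ s₃))
      (hT12 _ (sel_append s₁ hm₂)) (hT3 _ s₃)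
  · -- AllUsed
    intro u v huv
    obtain ⟨α, β, hT⟩ := hused u
    refine ⟨α, β, ?_, fun a ha => ?_⟩
    · intro p hp
      have : p = (u, v) := by simpa using hp
      subst this; exact huv
    cases ha with
    | cons hp ha' =>
      cases ha'
      rcases hp with h | h <;> subst h
      · exact hT
      · exact hcf α [u] _ β hT (List.Forall₂.cons huv List.Forall₂.nil)
  · -- Intermediate
    rintro α l₁ l₂ β h1 h2 ⟨hlab, hT⟩
    have s₁ := sel_fst l₁
    have s₂ := sel_fst l₂
    obtain ⟨ν, hν₁, hν₂⟩ := hint α _ _ β (sel_ne_nil s₁ h1) (sel_ne_nil s₂ h2)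
      (hT _ (sel_append s₁ s₂))
    have hlab₁ : ∀ p ∈ l₁, μ p.1 = μ p.2 := fun p hp => hlab p (by simp [hp])
    have hlab₂ : ∀ p ∈ l₂, μ p.1 = μ p.2 := fun p hp => hlab p (by simp [hp])
    exact ⟨ν, ⟨hlab₁, fun a ha => hcf _ _ _ _ hν₁ (sel_labels μ hlab₁ s₁ ha)⟩,
      ⟨hlab₂, fun a ha => hcf _ _ _ _ hν₂ (sel_labels μ hlab₂ s₂ ha)⟩⟩
  · -- iff
    intro α l β
    constructor
    · rintro ⟨hlab, hT⟩
      exact ⟨hlab, l.map Prod.fst, sel_fst l, hT _ (sel_fst l)⟩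
    · rintro ⟨hlab, l', hsel, hT⟩
      exact ⟨hlab, fun a ha => hcf _ _ _ _ hT (sel_labels μ hlab hsel ha)⟩
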